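/- Let (a_n) and (d_n) be sequences of positive real numbers and (b_n) a sequence of nonnegative real numbers, and let P_n be the 2×2 matrix product P_n := [[a_1, b_1],[0, d_1]]⋯[[a_n, b_n],[0, d_n]]. Define s := Σ_{n=1}^∞ (a_1⋯a_{n−1}·b_n)/(d_1⋯d_{n−1}·d_n) ∈ [0, +∞]. Then the normalized first column P_n U_1/‖P_n U_1‖ converges to (1,0)^T as n → +∞; and the normalized second column P_n U_2/‖P_n U_2‖ converges to (s/(s+1), 1/(s+1))^T if s < +∞, and to (1,0)^T if s = +∞. -/

import Mathlib

open Matrix Filter Finset Topology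

/-- ℓ¹-norm (sum of absolute values of the entries) of a vector. -/
noncomputable def l1 {d : ℕ} (v : Fin d → ℝ) : ℝ := ∑ i, |v i|

/-- Normalization of a vector by its ℓ¹-norm. -/
noncomputable def nrm {d : ℕ} (v : Fin d → ℝ) : Fin d → ℝ := (l1 v)⁻¹ • v

/-- The `j`-th column of a matrix, i.e. `A ⬝ U_j`. -/
def colv {d1 d2 : ℕ} (A : Matrix (Fin d1) (Fin d2) ℝ) (j : Fin d2) : Fin d1 → ℝ :=
  fun i => A i j

/-- Probability vector: nonnegative entries summing to `1`. -/
def probVec {d : ℕ} (X : Fin d → ℝ) : Prop := (∀ i, 0 ≤ X i) ∧ ∑ i, X i = 1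

/-- Class `H1`: any two columns have comparable supports. -/
def memH1 {d1 d2 : ℕ} (A : Matrix (Fin d1) (Fin d2) ℝ) : Prop :=
  ∀ j0 j1 : Fin d2, (∀ i, A i j0 ≠ 0 → A i j1 ≠ 0) ∨ (∀ i, A i j1 ≠ 0 → A i j0 ≠ 0)

/-- Class `H2(Λ)`: `A i0 j0 ≠ 0` implies `‖A U_{j0}‖ ≤ Λ · A i0 j0`. -/
def memH2 {d1 d2 : ℕ} (L : ℝ) (A : Matrix (Fin d1) (Fin d2) ℝ) : Prop :=
  ∀ i0 j0, A i0 j0 ≠ 0 → (∑ i, A i j0) ≤ L * A i0 j0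

/-- Class `H3(λ)`: `A i0 j0 ≠ 0` and `A i0 j1 = 0` imply `‖A U_{j1}‖ ≤ λ · A i0 j0`. -/
def memH3 {d1 d2 : ℕ} (l : ℝ) (A : Matrix (Fin d1) (Fin d2) ℝ) : Prop :=
  ∀ i0 j0 j1, A i0 j0 ≠ 0 → A i0 j1 = 0 → (∑ i, A i j1) ≤ l * A i0 j0

/-- `blockProd A m n = A (m+1) * A (m+2) * ⋯ * A n` (identity if `n ≤ m`). -/
noncomputable def blockProd {d : ℕ} (A : ℕ → Matrix (Fin d) (Fin d) ℝ) (m n : ℕ) :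
    Matrix (Fin d) (Fin d) ℝ :=
  ((List.range (n - m)).map fun i => A (m + 1 + i)).prod

/-- Condition (C) w.r.t. `0 ≤ lam < 1 ≤ Lam` and the sequence `s` with
`0 = s 0 = s 1 < s 2 < ⋯`: for every `n ≥ s 2`, with `k = k(n)` the index such that
`s (k+1) ≤ n < s (k+2)`, the product `Q n = A (s k + 1) ⋯ A n` belongs to
`H1 ∩ H2(Lam) ∩ H3(lam)`. -/
def condC {d : ℕ} (A : ℕ → Matrix (Fin d) (Fin d) ℝ) (lam Lam : ℝ) (s : ℕ → ℕ) : Prop :=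
  s 0 = 0 ∧ s 1 = 0 ∧ (∀ k, 1 ≤ k → s k < s (k + 1)) ∧
    ∀ n k, s 2 ≤ n → s (k + 1) ≤ n → n < s (k + 2) →
      memH1 (blockProd A (s k) n) ∧ memH2 Lam (blockProd A (s k) n) ∧
        memH3 lam (blockProd A (s k) n)

/-- The 2×2 upper-triangular matrix `[[a n, b n],[0, e n]]`. -/
noncomputable def triMat (a b e : ℕ → ℝ) (n : ℕ) : Matrix (Fin 2) (Fin 2) ℝ :=
  !![a n, b n; 0, e n]

/-- The general term `(a_1⋯a_n · b_{n+1}) / (d_1⋯d_n · d_{n+1})` of the series `s`. -/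
noncomputable def triSeries (a b e : ℕ → ℝ) (n : ℕ) : ℝ :=
  ((∏ k ∈ Finset.range n, a (k + 1)) * b (n + 1)) /
    ((∏ k ∈ Finset.range n, e (k + 1)) * e (n + 1))

lemma blockProd_zero_succ {d : ℕ} (A : ℕ → Matrix (Fin d) (Fin d) ℝ) (n : ℕ) :
    blockProd A 0 (n + 1) = blockProd A 0 n * A (n + 1) := by
  simp [blockProd, List.range_succ, Nat.add_comm 1 n]

lemma triProd (a b e : ℕ → ℝ)
    (he : ∀ n, 1 ≤ n → 0 < e n) (n : ℕ) :
    blockProd (triMat a b e) 0 n =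
      !![∏ k ∈ range n, a (k+1),
         (∏ k ∈ range n, e (k+1)) * ∑ m ∈ range n, triSeries a b e m;
         0, ∏ k ∈ range n, e (k+1)] := by
  induction n with
  | zero =>
      simp [blockProd, Matrix.one_fin_two]
  | succ n ih =>
      have hpe : (0:ℝ) < ∏ k ∈ range n, e (k+1) :=
        Finset.prod_pos fun k _ => he _ (Nat.le_add_left 1 k)
      have he1 : (0:ℝ) < e (n+1) := he _ (Nat.le_add_left 1 n)
      rw [blockProd_zero_succ, ih, triMat]
      ext i j
      fin_cases i <;> fin_cases j <;>
        simp [Matrix.mul_apply, Fin.sum_univ_two, Finset.prod_range_succ,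
          Finset.sum_range_succ, triSeries]
      field_simp
      ring

/-- **Example 2 (§ 4.2).** For products of 2×2 upper-triangular matrices with positive
diagonal and nonnegative upper-right entries, the normalized first column converges to
`(1,0)ᵀ`, and the normalized second column converges to `(s/(s+1), 1/(s+1))ᵀ` when
`s = Σ a_1⋯a_{n−1} b_n / (d_1⋯d_{n−1} d_n) < ∞`, and to `(1,0)ᵀ` when `s = ∞`. -/
theorem triangular_columns (a b e : ℕ → ℝ)
    (ha : ∀ n, 1 ≤ n → 0 < a n) (he : ∀ n, 1 ≤ n → 0 < e n)
    (hb : ∀ n, 1 ≤ n → 0 ≤ b n) :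
    Tendsto (fun n => nrm (colv (blockProd (triMat a b e) 0 n) 0)) atTop
      (nhds ![1, 0]) ∧
    (Summable (triSeries a b e) →
      Tendsto (fun n => nrm (colv (blockProd (triMat a b e) 0 n) 1)) atTop
        (nhds ![(∑' n, triSeries a b e n) / ((∑' n, triSeries a b e n) + 1),
                1 / ((∑' n, triSeries a b e n) + 1)])) ∧
    (¬ Summable (triSeries a b e) →
      Tendsto (fun n => nrm (colv (blockProd (triMat a b e) 0 n) 1)) atTop
        (nhds ![1, 0])) := by
  set S : ℕ → ℝ := fun n => ∑ m ∈ range n, triSeries a b e m with hS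
  have hts : ∀ m, 0 ≤ triSeries a b e m := by
    intro m
    apply div_nonneg
    · exact mul_nonneg (Finset.prod_nonneg fun k _ => (ha _ (Nat.le_add_left 1 k)).le)
        (hb _ (Nat.le_add_left 1 m))
    · exact mul_nonneg (Finset.prod_nonneg fun k _ => (he _ (Nat.le_add_left 1 k)).le)
        (he _ (Nat.le_add_left 1 m)).le
  have hSnn : ∀ n, 0 ≤ S n := fun n => Finset.sum_nonneg fun m _ => hts m
  have hSd : ∀ n, (0:ℝ) < S n + 1 := fun n => by linarith [hSnn n]
  have hpa : ∀ n, (0:ℝ) < ∏ k ∈ range n, a (k+1) := fun n =>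
    Finset.prod_pos fun k _ => ha _ (Nat.le_add_left 1 k)
  have hpe : ∀ n, (0:ℝ) < ∏ k ∈ range n, e (k+1) := fun n =>
    Finset.prod_pos fun k _ => he _ (Nat.le_add_left 1 k)
  have hcol0 : ∀ n, nrm (colv (blockProd (triMat a b e) 0 n) 0) = ![1, 0] := by
    intro n
    rw [triProd a b e he n]
    funext i
    have h0 : |∏ k ∈ range n, a (k+1)| = ∏ k ∈ range n, a (k+1) :=
      abs_of_pos (hpa n)
    fin_cases i <;>
      simp [nrm, colv, l1, Fin.sum_univ_two, h0, inv_mul_cancel₀ (hpa n).ne']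
  have hnrm2 : ∀ x y : ℝ, 0 ≤ x → 0 < y → nrm ![x, y] = ![x/(x+y), y/(x+y)] := by
    intro x y hx hy
    funext i
    fin_cases i <;>
      simp [nrm, l1, Fin.sum_univ_two, abs_of_nonneg hx, abs_of_pos hy, inv_mul_eq_div]
  have hcol1 : ∀ n, nrm (colv (blockProd (triMat a b e) 0 n) 1) =
      ![S n / (S n + 1), 1 / (S n + 1)] := by
    intro n
    rw [triProd a b e he n]
    have hv : colv !![∏ k ∈ range n, a (k+1),
         (∏ k ∈ range n, e (k+1)) * ∑ m ∈ range n, triSeries a b e m;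
         0, ∏ k ∈ range n, e (k+1)] 1
        = ![(∏ k ∈ range n, e (k+1)) * S n, ∏ k ∈ range n, e (k+1)] := by
      funext i; fin_cases i <;> simp [colv, hS]
    rw [hv, hnrm2 _ _ (mul_nonneg (hpe n).le (hSnn n)) (hpe n)]
    have key : (∏ k ∈ range n, e (k+1)) * S n + (∏ k ∈ range n, e (k+1))
        = (∏ k ∈ range n, e (k+1)) * (S n + 1) := by ring
    funext i
    fin_cases i <;>
      · simp only [key, Matrix.cons_val_zero, Matrix.cons_val_one, Matrix.head_cons]
        field_simp [(hpe n).ne', (hSd n).ne']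
        try ring
  refine ⟨?_, ?_, ?_⟩
  · simp only [hcol0]
    exact tendsto_const_nhds
  · intro hsum
    have hSt : Tendsto S atTop (nhds (∑' n, triSeries a b e n)) :=
      hsum.hasSum.tendsto_sum_nat
    have hs0 : (0:ℝ) ≤ ∑' n, triSeries a b e n := tsum_nonneg hts
    have hsd : (∑' n, triSeries a b e n) + 1 ≠ 0 := by linarith
    simp only [hcol1]
    rw [tendsto_pi_nhds]
    intro i
    fin_cases i
    · have h : Tendsto (fun i => S i / (S i + 1)) atTop _ := Tendsto.div hSt (hSt.add_const 1) hsd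
      simpa using h
    · simpa [one_div] using (hSt.add_const 1).inv₀ hsd
  · intro hnsum
    have hSt : Tendsto S atTop atTop :=
      (not_summable_iff_tendsto_nat_atTop_of_nonneg hts).mp hnsum
    have hd : Tendsto (fun n => S n + 1) atTop atTop :=
      hSt.atTop_add tendsto_const_nhds
    have hinv : Tendsto (fun n => 1 / (S n + 1)) atTop (nhds 0) := by
      have h : Tendsto (fun n => (S n + 1)⁻¹) atTop _ := hd.inv_tendsto_atTop
      simpa [one_div] using h
    have hfst : Tendsto (fun n => S n / (S n + 1)) atTop (nhds 1) := by
      have heq : (fun n => S n / (S n + 1)) = fun n => 1 - 1 / (S n + 1) := by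
        funext n
        have := (hSd n).ne'
        field_simp
        ring
      rw [heq]
      simpa using tendsto_const_nhds.sub hinv
    simp only [hcol1]
    rw [tendsto_pi_nhds]
    intro i
    fin_cases i
    · simpa using hfst
    · simpa using hinv
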